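/- arXiv:2006.02223 — 2 statements merged into one kernel-verified Lean document; each statement's English description precedes it below -/
import Mathlib

section
/- Let (C,E,s) be an n-exangulated category and let α ∈ C(A,B) and h ∈ C(A,C) be any pair of morphisms. If α is an inflation, then the morphism with components −α and h from A to B ⊕ C (i.e. the column matrix [−α; h] : A → B ⊕ C) is also an inflation. -/
open CategoryTheory CategoryTheory.Limits Opposite ZeroObject

universe v u

/-- A sequence of composable morphisms in `C`, indexed by `ℕ`.
For a complex of length `n+2` we only use the objects `0,…,n+1` and maps `0,…,n`. -/
structure ExSeq (C : Type u) [Category.{v} C] : Type max u v where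
  obj : ℕ → C
  map : ∀ i : ℕ, obj i ⟶ obj (i + 1)

/-- A morphism of sequences, where only the components `0,…,n+1` (and the
commutativity of the squares involving the maps `0,…,n`) are relevant. -/
structure ExSeqHom {C : Type u} [Category.{v} C] (n : ℕ) (X Y : ExSeq C) :
    Type max u v where
  hom : ∀ i, X.obj i ⟶ Y.obj i
  comm : ∀ i, i ≤ n → X.map i ≫ hom (i + 1) = hom i ≫ Y.map i

/-- The data of an `n`-exangulated category: an additive bifunctor
`E : Cᵒᵖ × C ⥤ Ab` together with a predicate singling out the distinguished
`n`-exangles, i.e. the pairs `⟨X, δ⟩` with `s(δ) = [X]`. -/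
structure ExData (n : ℕ) (C : Type u) [Category.{v} C] [Preadditive C] :
    Type max u (v + 1) where
  E : Cᵒᵖ ⥤ C ⥤ AddCommGrpCat.{v}
  Dist : ∀ X : ExSeq C, ((E.obj (op (X.obj (n + 1)))).obj (X.obj 0)) → Prop

namespace ExData

variable {n : ℕ} {C : Type u} [Category.{v} C] [Preadditive C] (S : ExData n C)

/-- `S.Ext Cc A` is the group `E(Cc, A)` of `E`-extensions. -/
abbrev Ext (Cc A : C) : Type v := (S.E.obj (op Cc)).obj A

/-- `a_* δ`, the pushforward of an `E`-extension along `a : A ⟶ A'`. -/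
def push {Cc A A' : C} (a : A ⟶ A') (δ : S.Ext Cc A) : S.Ext Cc A' :=
  ((S.E.obj (op Cc)).map a) δ

/-- `c^* δ`, the pullback of an `E`-extension along `c : Cc' ⟶ Cc`. -/
def pull {Cc' Cc A : C} (c : Cc' ⟶ Cc) (δ : S.Ext Cc A) : S.Ext Cc' A :=
  ((S.E.map c.op).app A) δ

/-- `f` is an inflation if it occurs as the `0`-th differential of a
distinguished `n`-exangle. -/
def IsInflation {A B : C} (f : A ⟶ B) : Prop :=
  ∃ (X : ExSeq C) (δ : S.Ext (X.obj (n + 1)) (X.obj 0)), S.Dist X δ ∧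
    ∃ (h0 : X.obj 0 = A) (h1 : X.obj 1 = B),
      X.map 0 = eqToHom h0 ≫ f ≫ eqToHom h1.symm

/-- `f` is a deflation if it occurs as the `n`-th differential of a
distinguished `n`-exangle. -/
def IsDeflation {A B : C} (f : A ⟶ B) : Prop :=
  ∃ (X : ExSeq C) (δ : S.Ext (X.obj (n + 1)) (X.obj 0)), S.Dist X δ ∧
    ∃ (h0 : X.obj n = A) (h1 : X.obj (n + 1) = B),
      X.map n = eqToHom h0 ≫ f ≫ eqToHom h1.symm

/-- Projective objects. -/
def Proj (P : C) : Prop :=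
  ∀ (X : ExSeq C) (δ : S.Ext (X.obj (n + 1)) (X.obj 0)), S.Dist X δ →
    ∀ c : P ⟶ X.obj (n + 1), ∃ b : P ⟶ X.obj n, b ≫ X.map n = c

/-- Injective objects. -/
def Inj (I : C) : Prop :=
  ∀ (X : ExSeq C) (δ : S.Ext (X.obj (n + 1)) (X.obj 0)), S.Dist X δ →
    ∀ c : X.obj 0 ⟶ I, ∃ b : X.obj 1 ⟶ I, X.map 0 ≫ b = c

/-- `C` has enough projectives. -/
def EnoughProj : Prop :=
  ∀ Cc : C, ∃ (X : ExSeq C) (δ : S.Ext (X.obj (n + 1)) (X.obj 0)),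
    S.Dist X δ ∧ X.obj (n + 1) = Cc ∧ ∀ i, 1 ≤ i → i ≤ n → S.Proj (X.obj i)

/-- `C` has enough injectives. -/
def EnoughInj : Prop :=
  ∀ A : C, ∃ (X : ExSeq C) (δ : S.Ext (X.obj (n + 1)) (X.obj 0)),
    S.Dist X δ ∧ X.obj 0 = A ∧ ∀ i, 1 ≤ i → i ≤ n → S.Inj (X.obj i)

end ExData

section Cone

variable (n : ℕ) {C : Type u} [Category.{v} C] [Preadditive C] [HasBinaryBiproducts C]

/-- `M` is the mapping cone of a morphism `f : X ⟶ Y` of `n`-exangles whose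
`0`-th component is (up to the identifications) an identity. -/
structure IsCone {X Y : ExSeq C} (f : ExSeqHom n X Y) (M : ExSeq C) : Prop where
  h0 : M.obj 0 = X.obj 1
  hlast : M.obj (n + 1) = Y.obj (n + 1)
  hmid : ∀ i, i + 1 ≤ n → M.obj (i + 1) = (X.obj (i + 2) ⊞ Y.obj (i + 1))
  map0 : ∀ h : 1 ≤ n, M.map 0 =
    eqToHom h0 ≫ biprod.lift (-(X.map 1)) (f.hom 1) ≫ eqToHom (hmid 0 h).symm
  mapmid : ∀ i (h : i + 2 ≤ n), M.map (i + 1) =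
    eqToHom (hmid i (by omega)) ≫
      biprod.desc (biprod.lift (-(X.map (i + 2))) (f.hom (i + 2)))
        (biprod.lift 0 (Y.map (i + 1))) ≫ eqToHom (hmid (i + 1) h).symm
  maplast : ∀ i (h : i + 1 = n), M.map (i + 1) =
    eqToHom (hmid i (by omega)) ≫ biprod.desc (f.hom (i + 2)) (Y.map (i + 1)) ≫
      eqToHom (show Y.obj (i + 2) = M.obj (i + 2) from by subst h; exact hlast.symm)

/-- `N` is the mapping cocone of a morphism `g : Y ⟶ X` of `n`-exangles whose
`(n+1)`-st component is (up to the identifications) an identity. -/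
structure IsCocone {Y X : ExSeq C} (g : ExSeqHom n Y X) (N : ExSeq C) : Prop where
  h0 : N.obj 0 = Y.obj 0
  hlast : N.obj (n + 1) = X.obj n
  hmid : ∀ i, i + 1 ≤ n → N.obj (i + 1) = (Y.obj (i + 1) ⊞ X.obj i)
  map0 : ∀ h : 1 ≤ n, N.map 0 =
    eqToHom h0 ≫ biprod.lift (-(Y.map 0)) (g.hom 0) ≫ eqToHom (hmid 0 h).symm
  mapmid : ∀ i (h : i + 2 ≤ n), N.map (i + 1) =
    eqToHom (hmid i (by omega)) ≫
      biprod.desc (biprod.lift (-(Y.map (i + 1))) (g.hom (i + 1)))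
        (biprod.lift 0 (X.map i)) ≫ eqToHom (hmid (i + 1) h).symm
  maplast : ∀ i (h : i + 1 = n), N.map (i + 1) =
    eqToHom (hmid i (by omega)) ≫ biprod.desc (g.hom (i + 1)) (X.map i) ≫
      eqToHom (show X.obj (i + 1) = N.obj (i + 2) from by subst h; exact hlast.symm)

end Cone

/-- The axioms (R0), (R1), (R2), (EA1), (EA2), (EA2ᵒᵖ) for the data of an
`n`-exangulated category, following Herschend–Liu–Nakaoka. -/
structure IsExangulated {n : ℕ} {C : Type u} [Category.{v} C] [Preadditive C]
    [HasBinaryBiproducts C] (S : ExData n C) : Prop where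
  /-- `E` is additive in the contravariant variable. -/
  additive_left : S.E.Additive
  /-- `E` is additive in the covariant variable. -/
  additive_right : ∀ X : Cᵒᵖ, (S.E.obj X).Additive
  /-- every `E`-extension admits a realization. -/
  realize : ∀ (A Cc : C) (δ : S.Ext Cc A), ∃ (X : ExSeq C)
    (h0 : X.obj 0 = A) (h1 : X.obj (n + 1) = Cc),
      S.Dist X (S.push (eqToHom h0.symm) (S.pull (eqToHom h1) δ))
  /-- (R0): morphisms of `E`-extensions lift to morphisms of realizations. -/
  lift : ∀ (X Y : ExSeq C) (δX : S.Ext (X.obj (n + 1)) (X.obj 0))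
    (δY : S.Ext (Y.obj (n + 1)) (Y.obj 0)), S.Dist X δX → S.Dist Y δY →
    ∀ (a : X.obj 0 ⟶ Y.obj 0) (c : X.obj (n + 1) ⟶ Y.obj (n + 1)),
      S.push a δX = S.pull c δY →
      ∃ f : ExSeqHom n X Y, f.hom 0 = a ∧ f.hom (n + 1) = c
  /-- (R1), covariant part, middle. -/
  ex_cov_mid : ∀ (X : ExSeq C) (δ : S.Ext (X.obj (n + 1)) (X.obj 0)), S.Dist X δ →
    ∀ i, i + 1 ≤ n → ∀ (Z : C) (g : Z ⟶ X.obj (i + 1)),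
      (g ≫ X.map (i + 1) = 0 ↔ ∃ h : Z ⟶ X.obj i, h ≫ X.map i = g)
  /-- (R1), covariant part, last position. -/
  ex_cov_last : ∀ (X : ExSeq C) (δ : S.Ext (X.obj (n + 1)) (X.obj 0)), S.Dist X δ →
    ∀ (Z : C) (g : Z ⟶ X.obj (n + 1)),
      (S.pull g δ = 0 ↔ ∃ h : Z ⟶ X.obj n, h ≫ X.map n = g)
  /-- (R1), contravariant part, middle. -/
  ex_con_mid : ∀ (X : ExSeq C) (δ : S.Ext (X.obj (n + 1)) (X.obj 0)), S.Dist X δ →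
    ∀ i, i + 1 ≤ n → ∀ (Z : C) (g : X.obj (i + 1) ⟶ Z),
      (X.map i ≫ g = 0 ↔ ∃ h : X.obj (i + 2) ⟶ Z, X.map (i + 1) ≫ h = g)
  /-- (R1), contravariant part, last position. -/
  ex_con_last : ∀ (X : ExSeq C) (δ : S.Ext (X.obj (n + 1)) (X.obj 0)), S.Dist X δ →
    ∀ (Z : C) (g : X.obj 0 ⟶ Z),
      (S.push g δ = 0 ↔ ∃ h : X.obj 1 ⟶ Z, X.map 0 ≫ h = g)
  /-- (R2): the trivial complex `A = A → 0 → ⋯ → 0` realizes `0 ∈ E(0, A)`. -/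
  r2 : ∀ A : C, ∃ (X : ExSeq C) (h0 : X.obj 0 = A) (h1 : X.obj 1 = A),
    X.map 0 = eqToHom (h0.trans h1.symm) ∧
    (∀ i, 2 ≤ i → i ≤ n + 1 → IsZero (X.obj i)) ∧ S.Dist X 0
  /-- (R2)ᵒᵖ: the trivial complex `0 → ⋯ → 0 → A = A` realizes `0 ∈ E(A, 0)`. -/
  r2' : ∀ A : C, ∃ (X : ExSeq C) (h0 : X.obj n = A) (h1 : X.obj (n + 1) = A),
    X.map n = eqToHom (h0.trans h1.symm) ∧
    (∀ i, i + 1 ≤ n → IsZero (X.obj i)) ∧ S.Dist X 0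
  /-- (EA1): inflations are closed under composition. -/
  comp_infl : ∀ {A B D : C} (f : A ⟶ B) (g : B ⟶ D),
    S.IsInflation f → S.IsInflation g → S.IsInflation (f ≫ g)
  /-- (EA1): deflations are closed under composition. -/
  comp_defl : ∀ {A B D : C} (f : A ⟶ B) (g : B ⟶ D),
    S.IsDeflation f → S.IsDeflation g → S.IsDeflation (f ≫ g)
  /-- (EA2): good lifts of `(id, c)` exist. -/
  ea2 : ∀ (X Y : ExSeq C) (ρ : S.Ext (Y.obj (n + 1)) (Y.obj 0))
    (hA : X.obj 0 = Y.obj 0) (c : X.obj (n + 1) ⟶ Y.obj (n + 1)),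
    S.Dist Y ρ → S.Dist X (S.push (eqToHom hA.symm) (S.pull c ρ)) →
    ∃ (f : ExSeqHom n X Y) (_ : f.hom 0 = eqToHom hA) (_ : f.hom (n + 1) = c)
      (M : ExSeq C) (hM : IsCone n f M),
      S.Dist M (S.push (eqToHom hM.h0.symm)
        (S.pull (eqToHom hM.hlast) (S.push (eqToHom hA.symm ≫ X.map 0) ρ)))
  /-- (EA2)ᵒᵖ: good lifts of `(a, id)` exist. -/
  ea2op : ∀ (Y X : ExSeq C) (ρ : S.Ext (Y.obj (n + 1)) (Y.obj 0))
    (hC : Y.obj (n + 1) = X.obj (n + 1)) (a : Y.obj 0 ⟶ X.obj 0),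
    S.Dist Y ρ → S.Dist X (S.push a (S.pull (eqToHom hC.symm) ρ)) →
    ∃ (g : ExSeqHom n Y X) (_ : g.hom 0 = a) (_ : g.hom (n + 1) = eqToHom hC)
      (N : ExSeq C) (hN : IsCocone n g N),
      S.Dist N (S.push (eqToHom hN.h0.symm)
        (S.pull (eqToHom hN.hlast ≫ X.map n ≫ eqToHom hC.symm) ρ))
section Quot

variable {C : Type u} [Category.{v} C] [Preadditive C] [HasZeroObject C]
  [HasBinaryBiproducts C]

/-- A (full) additive subcategory of `C`, given by a class of objects closed
under isomorphisms, finite direct sums and containing the zero objects. -/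
structure AddSubcat (C : Type u) [Category.{v} C] [Preadditive C]
    [HasZeroObject C] [HasBinaryBiproducts C] : Type max u v where
  mem : C → Prop
  zero_mem : ∀ Z : C, IsZero Z → mem Z
  iso_mem : ∀ {A B : C}, (A ≅ B) → mem A → mem B
  sum_mem : ∀ {A B : C}, mem A → mem B → mem (A ⊞ B)

variable (𝒳 : AddSubcat C)

/-- `f : A ⟶ B` is `𝒳`-monic. -/
def XMonic {A B : C} (f : A ⟶ B) : Prop :=
  ∀ M : C, 𝒳.mem M → ∀ g : A ⟶ M, ∃ h : B ⟶ M, f ≫ h = g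

/-- `f : A ⟶ B` is `𝒳`-epic. -/
def XEpic {A B : C} (f : A ⟶ B) : Prop :=
  ∀ M : C, 𝒳.mem M → ∀ g : M ⟶ B, ∃ h : M ⟶ A, h ≫ f = g

/-- `f : A ⟶ B` is a left `𝒳`-approximation of `A`. -/
def LeftApprox {A B : C} (f : A ⟶ B) : Prop := 𝒳.mem B ∧ XMonic 𝒳 f

/-- `f : A ⟶ B` is a right `𝒳`-approximation of `B`. -/
def RightApprox {A B : C} (f : A ⟶ B) : Prop := 𝒳.mem A ∧ XEpic 𝒳 f

/-- The ideal `[𝒳](A,B)` of morphisms factoring through an object of `𝒳`. -/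
def homIdeal (A B : C) : AddSubgroup (A ⟶ B) where
  carrier := {f | ∃ M : C, 𝒳.mem M ∧ ∃ (g : A ⟶ M) (h : M ⟶ B), g ≫ h = f}
  zero_mem' := ⟨(0 : C), 𝒳.zero_mem (0 : C) (isZero_zero C), 0, 0, by simp⟩
  add_mem' := by
    rintro f f' ⟨M, hM, g, h, rfl⟩ ⟨M', hM', g', h', rfl⟩
    exact ⟨M ⊞ M', 𝒳.sum_mem hM hM', biprod.lift g g', biprod.desc h h', by simp⟩
  neg_mem' := by
    rintro f ⟨M, hM, g, h, rfl⟩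
    exact ⟨M, hM, -g, h, by simp⟩

lemma homIdeal.comp_right {A B B' : C} {f : A ⟶ B} (hf : f ∈ homIdeal 𝒳 A B)
    (u : B ⟶ B') : f ≫ u ∈ homIdeal 𝒳 A B' := by
  obtain ⟨M, hM, g, h, rfl⟩ := hf
  exact ⟨M, hM, g, h ≫ u, by simp⟩

lemma homIdeal.comp_left {A' A B : C} {f : A ⟶ B} (hf : f ∈ homIdeal 𝒳 A B)
    (u : A' ⟶ A) : u ≫ f ∈ homIdeal 𝒳 A' B := by
  obtain ⟨M, hM, g, h, rfl⟩ := hf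
  exact ⟨M, hM, u ≫ g, h, by simp⟩

/-- The objects of the quotient category `C/𝒳`. -/
@[ext]
structure QuotObj (𝒳 : AddSubcat C) : Type u where
  as : C

/-- The quotient (additive) category `C/𝒳`. -/
instance QuotObj.category : Category.{v} (QuotObj 𝒳) where
  Hom A B := (A.as ⟶ B.as) ⧸ homIdeal 𝒳 A.as B.as
  id A := QuotientAddGroup.mk (𝟙 A.as)
  comp {A B D} f g := Quotient.liftOn₂ f g
    (fun f g => QuotientAddGroup.mk (f ≫ g))
    (by
      intro a₁ a₂ b₁ b₂ h₁ h₂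
      replace h₁ := QuotientAddGroup.leftRel_apply.mp h₁
      replace h₂ := QuotientAddGroup.leftRel_apply.mp h₂
      show QuotientAddGroup.mk (a₁ ≫ a₂) = QuotientAddGroup.mk (b₁ ≫ b₂)
      rw [QuotientAddGroup.eq]
      have heq : -(a₁ ≫ a₂) + b₁ ≫ b₂ =
          (-a₁ + b₁) ≫ a₂ + b₁ ≫ (-a₂ + b₂) := by
        simp only [Preadditive.add_comp, Preadditive.comp_add,
          Preadditive.neg_comp, Preadditive.comp_neg]
        abel
      rw [heq]
      exact (homIdeal 𝒳 _ _).add_mem (homIdeal.comp_right 𝒳 h₁ a₂)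
        (homIdeal.comp_left 𝒳 h₂ b₁))
  id_comp f := by
    induction f using Quotient.inductionOn
    exact congrArg _ (Category.id_comp _)
  comp_id f := by
    induction f using Quotient.inductionOn
    exact congrArg _ (Category.comp_id _)
  assoc f g h := by
    induction f using Quotient.inductionOn
    induction g using Quotient.inductionOn
    induction h using Quotient.inductionOn
    exact congrArg _ (Category.assoc _ _ _)

instance QuotObj.preadditive : Preadditive (QuotObj 𝒳) where
  homGroup A B := inferInstanceAs (AddCommGroup ((A.as ⟶ B.as) ⧸ homIdeal 𝒳 A.as B.as))
  add_comp A B D f f' g := by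
    induction f using Quotient.inductionOn
    induction f' using Quotient.inductionOn
    induction g using Quotient.inductionOn
    exact congrArg _ (Preadditive.add_comp _ _ _ _ _ _)
  comp_add A B D f g g' := by
    induction f using Quotient.inductionOn
    induction g using Quotient.inductionOn
    induction g' using Quotient.inductionOn
    exact congrArg _ (Preadditive.comp_add _ _ _ _ _ _)

/-- The quotient functor `C ⥤ C/𝒳`. -/
def quotFunctor : C ⥤ QuotObj 𝒳 where
  obj A := ⟨A⟩
  map f := QuotientAddGroup.mk f
  map_id _ := rfl
  map_comp _ _ := rfl

end Quot

section QuotBiprod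

variable {C : Type u} [Category.{v} C] [Preadditive C] [HasZeroObject C]
  [HasBinaryBiproducts C] (𝒳 : AddSubcat C)

instance QuotObj.hasBinaryBiproducts : HasBinaryBiproducts (QuotObj 𝒳) := by
  apply HasBinaryBiproducts.mk
  intro A B
  apply HasBinaryBiproduct.mk
  refine ⟨{ pt := ⟨A.as ⊞ B.as⟩
            fst := QuotientAddGroup.mk biprod.fst
            snd := QuotientAddGroup.mk biprod.snd
            inl := QuotientAddGroup.mk biprod.inl
            inr := QuotientAddGroup.mk biprod.inr
            inl_fst := ?_, inl_snd := ?_, inr_fst := ?_, inr_snd := ?_ }, ?_⟩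
  · show QuotientAddGroup.mk (biprod.inl ≫ biprod.fst) =
      QuotientAddGroup.mk (𝟙 A.as)
    rw [biprod.inl_fst]
  · show QuotientAddGroup.mk (biprod.inl ≫ biprod.snd) = _
    rw [biprod.inl_snd]; rfl
  · show QuotientAddGroup.mk (biprod.inr ≫ biprod.fst) = _
    rw [biprod.inr_fst]; rfl
  · show QuotientAddGroup.mk (biprod.inr ≫ biprod.snd) =
      QuotientAddGroup.mk (𝟙 B.as)
    rw [biprod.inr_snd]
  · apply isBinaryBilimitOfTotal
    show QuotientAddGroup.mk (biprod.fst ≫ biprod.inl) +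
        QuotientAddGroup.mk (biprod.snd ≫ biprod.inr) =
      QuotientAddGroup.mk (𝟙 (A.as ⊞ B.as))
    rw [show QuotientAddGroup.mk (biprod.fst ≫ biprod.inl) + QuotientAddGroup.mk (biprod.snd ≫ biprod.inr) = (QuotientAddGroup.mk (biprod.fst ≫ biprod.inl + biprod.snd ≫ biprod.inr) : (⟨A.as ⊞ B.as⟩ : QuotObj 𝒳) ⟶ ⟨A.as ⊞ B.as⟩) from rfl]
    rw [biprod.total]

end QuotBiprod
section NAbelian

variable (n : ℕ) {C : Type u} [Category.{v} C] [Preadditive C]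

/-- `g` is a weak cokernel of `f`. -/
def IsWeakCokernel {A B D : C} (f : A ⟶ B) (g : B ⟶ D) : Prop :=
  f ≫ g = 0 ∧ ∀ (Z : C) (h : B ⟶ Z), f ≫ h = 0 → ∃ p : D ⟶ Z, g ≫ p = h

/-- `f` is a weak kernel of `g`. -/
def IsWeakKernel {A B D : C} (f : A ⟶ B) (g : B ⟶ D) : Prop :=
  f ≫ g = 0 ∧ ∀ (Z : C) (h : Z ⟶ B), h ≫ g = 0 → ∃ p : Z ⟶ A, p ≫ f = h

/-- The sequence `S.obj 1 → ⋯ → S.obj (n+1)` is an `n`-cokernel of `S.map 0`,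
i.e. `0 → (S_{n+1}, B) → ⋯ → (S_1, B) → (S_0, B)` is exact for every `B`. -/
def IsNCokernelOf (S : ExSeq C) : Prop :=
  (∀ i, i + 1 ≤ n → ∀ (Z : C) (h : S.obj (i + 1) ⟶ Z),
    (S.map i ≫ h = 0 ↔ ∃ p : S.obj (i + 2) ⟶ Z, S.map (i + 1) ≫ p = h)) ∧
  (∀ (Z : C) (g : S.obj (n + 1) ⟶ Z), S.map n ≫ g = 0 → g = 0)

/-- The sequence `S.obj 0 → ⋯ → S.obj n` is an `n`-kernel of `S.map n`,
i.e. `0 → (B, S_0) → ⋯ → (B, S_n) → (B, S_{n+1})` is exact for every `B`. -/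
def IsNKernelOf (S : ExSeq C) : Prop :=
  (∀ i, i + 1 ≤ n → ∀ (Z : C) (h : Z ⟶ S.obj (i + 1)),
    (h ≫ S.map (i + 1) = 0 ↔ ∃ p : Z ⟶ S.obj i, p ≫ S.map i = h)) ∧
  (∀ (Z : C) (g : Z ⟶ S.obj 0), g ≫ S.map 0 = 0 → g = 0)

/-- `n`-exact sequences. -/
def IsNExactSeq (S : ExSeq C) : Prop := IsNCokernelOf n S ∧ IsNKernelOf n S

/-- The sequence `S` starts with (a copy of) the morphism `f`. -/
def ExSeq.startsWith (S : ExSeq C) {A B : C} (f : A ⟶ B) : Prop :=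
  ∃ (h0 : S.obj 0 = A) (h1 : S.obj 1 = B), S.map 0 = eqToHom h0 ≫ f ≫ eqToHom h1.symm

/-- The sequence `S` ends (at position `n`) with (a copy of) the morphism `f`. -/
def ExSeq.endsWith (n : ℕ) (S : ExSeq C) {A B : C} (f : A ⟶ B) : Prop :=
  ∃ (h0 : S.obj n = A) (h1 : S.obj (n + 1) = B),
    S.map n = eqToHom h0 ≫ f ≫ eqToHom h1.symm

/-- `n`-abelian category, following Jasso: an additive category with split
idempotents in which every morphism has an `n`-kernel and an `n`-cokernel,
every monomorphism is the `0`-th morphism of an `n`-exact sequence, and every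
epimorphism is the `n`-th morphism of an `n`-exact sequence. -/
structure IsNAbelian (n : ℕ) (D : Type u) [Category.{v} D] [Preadditive D] : Prop where
  hasFiniteBiproducts : HasFiniteBiproducts D
  idemSplit : IsIdempotentComplete D
  hasNCokernels : ∀ {A B : D} (f : A ⟶ B),
    ∃ S : ExSeq D, S.startsWith f ∧ IsNCokernelOf n S
  hasNKernels : ∀ {A B : D} (f : A ⟶ B),
    ∃ S : ExSeq D, S.endsWith n f ∧ IsNKernelOf n S
  monoIsNExact : ∀ {A B : D} (f : A ⟶ B), Mono f →
    ∃ S : ExSeq D, S.startsWith f ∧ IsNExactSeq n S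
  epiIsNExact : ∀ {A B : D} (f : A ⟶ B), Epi f →
    ∃ S : ExSeq D, S.endsWith n f ∧ IsNExactSeq n S

end NAbelian

section ClusterTilting

variable {n : ℕ} {C : Type u} [Category.{v} C] [Preadditive C] [HasZeroObject C]
  [HasBinaryBiproducts C]

/-- A cluster tilting subcategory of an `n`-exangulated category. -/
def ExData.ClusterTilting (S : ExData n C) (𝒳 : AddSubcat C) : Prop :=
  (∀ X X' : C, 𝒳.mem X → 𝒳.mem X' → ∀ δ : S.Ext X X', δ = 0) ∧
  (∀ Cc : C, ∃ (X : ExSeq C) (δ : S.Ext (X.obj (n + 1)) (X.obj 0)),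
    S.Dist X δ ∧ X.obj (n + 1) = Cc ∧ ∀ i, i ≤ n → 𝒳.mem (X.obj i)) ∧
  (∀ A : C, ∃ (X : ExSeq C) (δ : S.Ext (X.obj (n + 1)) (X.obj 0)),
    S.Dist X δ ∧ X.obj 0 = A ∧ ∀ i, 1 ≤ i → i ≤ n + 1 → 𝒳.mem (X.obj i))

end ClusterTilting
section Angulated

variable {C : Type u} [Category.{v} C] [Preadditive C]

/-- An `(n+2)`-`Σ`-sequence `A₀ → A₁ → ⋯ → A_{n+1} → Σ A₀`. -/
structure SgSeq (C : Type u) [Category.{v} C] (Sg : C ⥤ C) (n : ℕ) :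
    Type max u v where
  obj : ℕ → C
  map : ∀ i, obj i ⟶ obj (i + 1)
  ext : obj (n + 1) ⟶ Sg.obj (obj 0)

/-- A morphism of `(n+2)`-`Σ`-sequences. -/
structure SgSeqHom {C : Type u} [Category.{v} C] {Sg : C ⥤ C} {n : ℕ}
    (X Y : SgSeq C Sg n) : Type max u v where
  hom : ∀ i, X.obj i ⟶ Y.obj i
  comm : ∀ i, i ≤ n → X.map i ≫ hom (i + 1) = hom i ≫ Y.map i
  comm_ext : X.ext ≫ Sg.map (hom 0) = hom (n + 1) ≫ Y.ext

variable {Sg : C ⥤ C} {n : ℕ}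

/-- `T` is (equal to) the trivial sequence `0 → A = A → 0 → ⋯ → 0`. -/
def IsTrivialSgSeq (A : C) (T : SgSeq C Sg n) : Prop :=
  IsZero (T.obj 0) ∧
  (∃ (h1 : T.obj 1 = A) (h2 : T.obj 2 = A), T.map 1 = eqToHom (h1.trans h2.symm)) ∧
  (∀ i, 3 ≤ i → i ≤ n + 1 → IsZero (T.obj i))

variable [HasBinaryBiproducts C]

/-- `U` is the direct sum of the sequences `X` and `Y`. -/
def IsBiprodSgSeq (X Y U : SgSeq C Sg n) : Prop :=
  ∃ e : ∀ i, i ≤ n + 1 → U.obj i = (X.obj i ⊞ Y.obj i),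
    (∀ i (h : i + 1 ≤ n + 1), U.map i = eqToHom (e i (by omega)) ≫
      biprod.map (X.map i) (Y.map i) ≫ eqToHom (e (i + 1) h).symm) ∧
    U.ext = eqToHom (e (n + 1) le_rfl) ≫
      biprod.desc (X.ext ≫ Sg.map biprod.inl) (Y.ext ≫ Sg.map biprod.inr) ≫
        eqToHom (congrArg Sg.obj (e 0 (by omega)).symm)

/-- `T` is the left rotation of `X`. -/
def IsRotation (X T : SgSeq C Sg n) : Prop :=
  ∃ (e : ∀ i, i ≤ n → T.obj i = X.obj (i + 1)) (el : T.obj (n + 1) = Sg.obj (X.obj 0)),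
    (∀ i (h : i + 1 ≤ n), T.map i = eqToHom (e i (by omega)) ≫ X.map (i + 1) ≫
      eqToHom (e (i + 1) h).symm) ∧
    (T.map n = eqToHom (e n le_rfl) ≫ X.ext ≫ eqToHom el.symm) ∧
    (T.ext = eqToHom el ≫ (((-1 : ℤ) ^ n) • Sg.map (X.map 0)) ≫
      eqToHom (congrArg Sg.obj (e 0 (by omega)).symm))

/-- The axioms (RN1), (RN2), (RN3) of a right `(n+2)`-angulated category. -/
structure RightAngulatedRN123 (Sg : C ⥤ C) (n : ℕ) (Θ : Set (SgSeq C Sg n)) : Prop where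
  /-- (RN1)(a): `Θ` is closed under isomorphisms. -/
  iso_closed : ∀ (X Y : SgSeq C Sg n) (f : SgSeqHom X Y),
    (∀ i, i ≤ n + 1 → IsIso (f.hom i)) → X ∈ Θ → Y ∈ Θ
  /-- (RN1)(a): `Θ` is closed under direct sums. -/
  sum_closed : ∀ X Y U : SgSeq C Sg n, X ∈ Θ → Y ∈ Θ → IsBiprodSgSeq X Y U → U ∈ Θ
  /-- (RN1)(b): the trivial sequences belong to `Θ`. -/
  trivial_mem : ∀ A : C, ∃ T ∈ Θ, IsTrivialSgSeq A T
  /-- (RN1)(c): every morphism extends to a right `(n+2)`-angle. -/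
  extend : ∀ {A B : C} (f : A ⟶ B), ∃ T ∈ Θ, ∃ (h0 : T.obj 0 = A) (h1 : T.obj 1 = B),
    T.map 0 = eqToHom h0 ≫ f ≫ eqToHom h1.symm
  /-- (RN2): `Θ` is closed under left rotation. -/
  rot : ∀ X ∈ Θ, ∀ T, IsRotation X T → T ∈ Θ
  /-- (RN3): commutative squares extend to morphisms of right `(n+2)`-angles. -/
  rn3 : ∀ X Y : SgSeq C Sg n, X ∈ Θ → Y ∈ Θ →
    ∀ (a : X.obj 0 ⟶ Y.obj 0) (b : X.obj 1 ⟶ Y.obj 1), X.map 0 ≫ b = a ≫ Y.map 0 →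
      ∃ f : SgSeqHom X Y, f.hom 0 = a ∧ f.hom 1 = b

/-- A right `(n+2)`-angulated category: (RN1)–(RN3) together with the higher
octahedral axiom (RN4). -/
structure RightAngulated (Sg : C ⥤ C) (n : ℕ) (Θ : Set (SgSeq C Sg n)) extends
    RightAngulatedRN123 Sg n Θ : Prop where
  /-- (RN4): the higher octahedral axiom. -/
  rn4 : ∀ X Y U : SgSeq C Sg n, X ∈ Θ → Y ∈ Θ → U ∈ Θ →
    ∀ (h0 : Y.obj 0 = X.obj 0) (hU0 : U.obj 0 = X.obj 1) (hU1 : U.obj 1 = Y.obj 1),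
    Y.map 0 = eqToHom h0 ≫ X.map 0 ≫ (eqToHom hU0.symm ≫ U.map 0 ≫ eqToHom hU1) →
    ∃ (φ : ∀ i, X.obj i ⟶ Y.obj i) (ψ : ∀ i, Y.obj i ⟶ U.obj i)
      (φ' : ∀ i, X.obj (i + 1) ⟶ U.obj i),
      φ 0 = eqToHom h0.symm ∧
      φ 1 = eqToHom hU0.symm ≫ U.map 0 ≫ eqToHom hU1 ∧
      (∀ i, i ≤ n → X.map i ≫ φ (i + 1) = φ i ≫ Y.map i) ∧
      (φ (n + 1) ≫ Y.ext ≫ eqToHom (congrArg Sg.obj h0) = X.ext) ∧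
      (ψ (n + 1) ≫ U.ext ≫ eqToHom (congrArg Sg.obj hU0) =
        Y.ext ≫ eqToHom (congrArg Sg.obj h0) ≫ Sg.map (X.map 0)) ∧
      ∃ V ∈ Θ, ∃ (hV0 : V.obj 0 = X.obj 2)
        (hV1 : 2 ≤ n → V.obj 1 = (X.obj 3 ⊞ Y.obj 2))
        (hVmid : ∀ i, 2 ≤ i → i + 1 ≤ n → V.obj i = ((X.obj (i + 2) ⊞ Y.obj (i + 1)) ⊞ U.obj i))
        (hVn : ∀ j, j = n → 2 ≤ n → V.obj j = (Y.obj (j + 1) ⊞ U.obj j))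
        (hVl : V.obj (n + 1) = U.obj (n + 1)),
        (∀ h : 2 ≤ n, V.map 0 =
          eqToHom hV0 ≫ biprod.lift (X.map 2) (φ 2) ≫ eqToHom (hV1 h).symm) ∧
        (∀ h : 3 ≤ n, V.map 1 = eqToHom (hV1 (by omega)) ≫
          biprod.desc (biprod.lift (biprod.lift (-(X.map 3)) (φ 3)) (φ' 2))
            (biprod.lift (biprod.lift 0 (-(Y.map 2))) (ψ 2)) ≫
          eqToHom (hVmid 2 le_rfl h).symm) ∧
        (∀ i (h2 : 2 ≤ i) (hn : i + 2 ≤ n), V.map i =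
          eqToHom (hVmid i (by omega) (by omega)) ≫
          biprod.desc
            (biprod.desc
              (biprod.lift (biprod.lift (-(X.map (i + 2))) (((-1 : ℤ) ^ (i + 1)) • φ (i + 2))) (φ' (i + 1)))
              (biprod.lift (biprod.lift 0 (-(Y.map (i + 1)))) (ψ (i + 1))))
            (biprod.lift (biprod.lift 0 0) (U.map i)) ≫
          eqToHom (hVmid (i + 1) (by omega) (by omega)).symm) ∧
        (∀ h : n = 2, V.map 1 = eqToHom (hV1 (by omega)) ≫
          biprod.desc (biprod.lift (φ 3) (φ' 2)) (biprod.lift (-(Y.map 2)) (ψ 2)) ≫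
          eqToHom (hVn 2 h.symm (by omega)).symm) ∧
        (∀ i (h2 : 2 ≤ i) (hn : i + 1 = n), V.map i =
          eqToHom (hVmid i (by omega) (by omega)) ≫
          biprod.desc
            (biprod.desc
              (biprod.lift (((-1 : ℤ) ^ (i + 1)) • φ (i + 2)) (φ' (i + 1)))
              (biprod.lift (-(Y.map (i + 1))) (ψ (i + 1))))
            (biprod.lift 0 (U.map i)) ≫
          eqToHom (hVn (i + 1) (by omega) (by omega)).symm) ∧
        (∀ j (hj : j = n) (hn : 2 ≤ n), V.map j =
          eqToHom (hVn j hj hn) ≫ biprod.desc (ψ (j + 1)) (U.map j) ≫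
          eqToHom (show U.obj (j + 1) = V.obj (j + 1) from by rw [hj]; exact hVl.symm)) ∧
        (V.ext = eqToHom hVl ≫ U.ext ≫ eqToHom (congrArg Sg.obj hU0) ≫
          Sg.map (X.map 1) ≫ eqToHom (congrArg Sg.obj hV0).symm) ∧
        (∀ h : n = 1, ∃ e1 : V.obj 1 = Y.obj 2,
          V.map 0 = eqToHom hV0 ≫ φ 2 ≫ eqToHom e1.symm ∧
          V.map 1 = eqToHom e1 ≫ ψ 2 ≫
            eqToHom (show U.obj 2 = V.obj 2 from by
              rw [show (2 : ℕ) = n + 1 from by omega]; exact hVl.symm))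

/-- An `(n+2)`-angulated category in the sense of Geiss–Keller–Oppermann:
in addition to being right `(n+2)`-angulated, the suspension is an equivalence,
and `Θ` is closed under direct summands and inverse rotation. -/
structure Angulated (Sg : C ⥤ C) (n : ℕ) (Θ : Set (SgSeq C Sg n)) extends
    RightAngulated Sg n Θ : Prop where
  sg_equiv : Sg.IsEquivalence
  sg_additive : Sg.Additive
  rot_rev : ∀ X T : SgSeq C Sg n, IsRotation X T → T ∈ Θ → X ∈ Θ
  summand_closed : ∀ X Y U : SgSeq C Sg n, IsBiprodSgSeq X Y U → U ∈ Θ → X ∈ Θ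

end Angulated

namespace ExData
variable {n : ℕ} {C : Type u} [Category.{v} C] [Preadditive C] (S : ExData n C)

lemma push_push {Cc A A' A'' : C} (f : A ⟶ A') (g : A' ⟶ A'') (δ : S.Ext Cc A) :
    S.push g (S.push f δ) = S.push (f ≫ g) δ := by
  simp [push, Functor.map_comp]

lemma push_pull {Cc' Cc A A' : C} (e : Cc' ⟶ Cc) (b : A ⟶ A') (δ : S.Ext Cc A) :
    S.push b (S.pull e δ) = S.pull e (S.push b δ) := by
  have := ConcreteCategory.congr_hom ((S.E.map e.op).naturality b) δ
  simp only [CategoryTheory.comp_apply] at this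
  exact this.symm

end ExData

/-- If `α : A ⟶ B` is an inflation, then for any `h : A ⟶ D`
the morphism `[-α; h] : A ⟶ B ⊞ D` is also an inflation. -/
theorem inflation_lift_neg
    {n : ℕ} (hn : 0 < n) {C : Type u} [Category.{v} C] [Preadditive C]
    [HasZeroObject C] [HasBinaryBiproducts C]
    (S : ExData n C) (hS : IsExangulated S)
    {A B D : C} (α : A ⟶ B) (h : A ⟶ D) (hα : S.IsInflation α) :
    S.IsInflation (biprod.lift (-α) h) := by
  obtain ⟨Y, ρ, hρ, hY0, hY1, hYmap⟩ := hα
  subst hY0; subst hY1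
  simp only [eqToHom_refl, Category.id_comp, Category.comp_id] at hYmap
  obtain ⟨X, hX0, hX1, hXdist⟩ := hS.realize D (Y.obj (n + 1)) (S.push h ρ)
  subst hX0
  have hXdist' : S.Dist X (S.push h (S.pull (eqToHom hX1) ρ)) := by
    rw [S.push_pull]
    simpa [ExData.push] using hXdist
  obtain ⟨g, hg0, -, N, hN, hNdist⟩ := hS.ea2op Y X ρ hX1.symm h hρ hXdist'
  refine ⟨N, _, hNdist, hN.h0, hN.hmid 0 hn, ?_⟩
  rw [hN.map0 hn, hg0, hYmap]
end

section
/- Let C be a triangulated category (with shift functor Σ) whose idempotents split, and let X be a full additive subcategory of C such that: (1) Hom_C(X, ΣX') = 0 for all X, X' ∈ X; and (2) every object C of C fits into a distinguished triangle X_0 → X_1 → C → ΣX_0 with X_0, X_1 ∈ X and into a distinguished triangle C → X'_1 → X'_2 → ΣC with X'_1, X'_2 ∈ X. Then the quotient category C/X is an abelian category. (This is the case n = 1 of the main theorem, specialized to triangulated categories.) -/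
open CategoryTheory CategoryTheory.Limits Opposite ZeroObject

universe v u

/-! ### Auxiliary development: the Koenig–Zhu theorem -/

section KZ

open CategoryTheory.Pretriangulated CategoryTheory.Category CategoryTheory.Preadditive

set_option linter.unusedSectionVars false

variable {C : Type u} [Category.{v} C] [Preadditive C] [HasZeroObject C]
  [HasBinaryBiproducts C]

/-- The image of a morphism of `C` in the quotient category. -/
def qm (𝒳 : AddSubcat C) {A B : C} (f : A ⟶ B) : (⟨A⟩ : QuotObj 𝒳) ⟶ ⟨B⟩ :=
  QuotientAddGroup.mk f

variable (𝒳 : AddSubcat C)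

lemma qm_comp {A B D : C} (f : A ⟶ B) (g : B ⟶ D) :
    qm 𝒳 f ≫ qm 𝒳 g = qm 𝒳 (f ≫ g) := rfl

lemma qm_zero_iff {A B : C} (f : A ⟶ B) :
    qm 𝒳 f = 0 ↔ f ∈ homIdeal 𝒳 A B :=
  QuotientAddGroup.eq_zero_iff f

lemma qm_zero {A B : C} : qm 𝒳 (0 : A ⟶ B) = 0 := by
  rw [qm_zero_iff]; exact zero_mem _

lemma qm_sub {A B : C} (f g : A ⟶ B) : qm 𝒳 (f - g) = qm 𝒳 f - qm 𝒳 g :=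
  map_sub (QuotientAddGroup.mk' (homIdeal 𝒳 A B)) f g

lemma qm_eq_iff {A B : C} (f g : A ⟶ B) :
    qm 𝒳 f = qm 𝒳 g ↔ f - g ∈ homIdeal 𝒳 A B := by
  rw [← sub_eq_zero, ← qm_sub, qm_zero_iff]

/-- A representative of a morphism of the quotient category. -/
noncomputable def repm {A B : C} (φ : (⟨A⟩ : QuotObj 𝒳) ⟶ ⟨B⟩) : A ⟶ B :=
  Quotient.out φ

lemma qm_repm {A B : C} (φ : (⟨A⟩ : QuotObj 𝒳) ⟶ ⟨B⟩) : qm 𝒳 (repm 𝒳 φ) = φ :=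
  Quotient.out_eq φ

lemma isZero_quot_zero : IsZero (⟨(0 : C)⟩ : QuotObj 𝒳) := by
  rw [IsZero.iff_id_eq_zero]
  show qm 𝒳 (𝟙 (0 : C)) = 0
  rw [Limits.id_zero, qm_zero]

lemma hasZeroObject_quot : HasZeroObject (QuotObj 𝒳) :=
  ⟨⟨(0 : C)⟩, isZero_quot_zero 𝒳⟩

section Shifted

variable [HasShift C ℤ] [∀ i : ℤ, (shiftFunctor C i).Additive] [Pretriangulated C]

lemma shift_hom_zero
    (h1 : ∀ X X' : C, 𝒳.mem X → 𝒳.mem X' →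
      ∀ f : X ⟶ (shiftFunctor C (1 : ℤ)).obj X', f = 0)
    {X' M : C} (hX' : 𝒳.mem X') (hM : 𝒳.mem M)
    (m : (shiftFunctor C (-1 : ℤ)).obj X' ⟶ M) : m = 0 := by
  apply (shiftFunctor C (1 : ℤ)).map_injective
  have e := (shiftFunctorCompIsoId C (-1 : ℤ) (1 : ℤ) (by omega)).app X'
  have h0 : e.inv ≫ (shiftFunctor C (1 : ℤ)).map m = 0 := h1 _ _ hX' hM _
  rw [Functor.map_zero]
  calc (shiftFunctor C (1 : ℤ)).map m
      = e.hom ≫ (e.inv ≫ (shiftFunctor C (1 : ℤ)).map m) := by simp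
    _ = 0 := by rw [h0, comp_zero]

lemma comp_zero_of_zero {P Q W : C} (a : P ⟶ Q) {b : Q ⟶ W} (hb : b = 0) :
    a ≫ b = 0 := by rw [hb, comp_zero]

lemma invRotate_premor (T : Triangle C) {W : C} (w : W ⟶ T.obj₃)
    (hw : w ≫ T.mor₃ = 0) :
    (shiftFunctor C (-1 : ℤ)).map w ≫ T.invRotate.mor₁ = 0 := by
  change (shiftFunctor C (-1 : ℤ)).map w ≫ (-(shiftFunctor C (-1 : ℤ)).map T.mor₃ ≫
    (shiftFunctorCompIsoId C (1 : ℤ) (-1 : ℤ) (by omega)).hom.app T.obj₁) = 0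
  rw [comp_neg, neg_eq_zero, ← assoc, ← Functor.map_comp, hw, Functor.map_zero,
    zero_comp]

lemma invRotate_mor_comp (T : Triangle C) {M'' W : C} (c : T.obj₃ ⟶ M'')
    (r : M'' ⟶ (shiftFunctor C (1 : ℤ)).obj T.obj₁)
    (hT3 : T.mor₃ = c ≫ r) (u : T.obj₁ ⟶ W)
    (hz : ∀ m : (shiftFunctor C (-1 : ℤ)).obj M'' ⟶ W, m = 0) :
    T.invRotate.mor₁ ≫ u = 0 := by
  change (-(shiftFunctor C (-1 : ℤ)).map T.mor₃ ≫
    (shiftFunctorCompIsoId C (1 : ℤ) (-1 : ℤ) (by omega)).hom.app T.obj₁) ≫ u = 0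
  rw [hT3, Functor.map_comp]
  simp only [neg_comp, neg_eq_zero, assoc]
  exact comp_zero_of_zero _ (hz _)

lemma mor₃_comp_zero_of (T : Triangle C) {M M' : C} (v : M ⟶ T.obj₃)
    (u' : (shiftFunctor C (-1 : ℤ)).obj T.obj₃ ⟶ M') (v' : M' ⟶ T.obj₁)
    (hk : T.invRotate.mor₁ = u' ≫ v')
    (h0 : (shiftFunctor C (-1 : ℤ)).map v ≫ u' = 0) : v ≫ T.mor₃ = 0 := by
  apply (shiftFunctor C (-1 : ℤ)).map_injective
  rw [Functor.map_comp, Functor.map_zero]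
  have h2 : (shiftFunctor C (-1 : ℤ)).map v ≫ T.invRotate.mor₁ = 0 := by
    rw [hk]; exact (assoc _ _ _).symm.trans ((congrArg (· ≫ v') h0).trans zero_comp)
  change (shiftFunctor C (-1 : ℤ)).map v ≫ (-(shiftFunctor C (-1 : ℤ)).map T.mor₃ ≫
    (shiftFunctorCompIsoId C (1 : ℤ) (-1 : ℤ) (by omega)).hom.app T.obj₁) = 0 at h2
  rw [comp_neg, neg_eq_zero, ← assoc] at h2
  rw [← cancel_mono ((shiftFunctorCompIsoId C (1 : ℤ) (-1 : ℤ)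
    (by omega)).hom.app T.obj₁), zero_comp]
  exact h2

variable (h1 : ∀ X X' : C, 𝒳.mem X → 𝒳.mem X' →
    ∀ f : X ⟶ (shiftFunctor C (1 : ℤ)).obj X', f = 0)
  (h2 : ∀ Cc : C, ∃ T : Triangle C, (T ∈ distTriang C) ∧
    𝒳.mem T.obj₁ ∧ 𝒳.mem T.obj₂ ∧ T.obj₃ = Cc)
  (h3 : ∀ Cc : C, ∃ T : Triangle C, (T ∈ distTriang C) ∧
    T.obj₁ = Cc ∧ 𝒳.mem T.obj₂ ∧ 𝒳.mem T.obj₃)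

include h1 h2 in
lemma exists_rightApprox (B : C) :
    ∃ (X₀ X₁ : C) (x : X₀ ⟶ X₁) (π : X₁ ⟶ B)
      (δ : B ⟶ (shiftFunctor C (1 : ℤ)).obj X₀),
      (Triangle.mk x π δ ∈ distTriang C) ∧ 𝒳.mem X₀ ∧ 𝒳.mem X₁ ∧
      ∀ (M : C), 𝒳.mem M → ∀ v : M ⟶ B, ∃ v' : M ⟶ X₁, v = v' ≫ π := by
  obtain ⟨T, hT, m1, m2, hB⟩ := h2 B
  have hT' : Triangle.mk T.mor₁ (T.mor₂ ≫ eqToHom hB)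
      (eqToHom hB.symm ≫ T.mor₃) ∈ distTriang C := by
    refine isomorphic_distinguished T hT _ ?_
    exact Triangle.isoMk _ _ (Iso.refl _) (Iso.refl _) (eqToIso hB.symm)
      (by simp [Triangle.mk]) (by simp [Triangle.mk]) (by simp [Triangle.mk])
  refine ⟨T.obj₁, T.obj₂, T.mor₁, T.mor₂ ≫ eqToHom hB,
    eqToHom hB.symm ≫ T.mor₃, hT', m1, m2, ?_⟩
  intro M hM v
  have hv : v ≫ (eqToHom hB.symm ≫ T.mor₃) = 0 := h1 _ _ hM m1 _
  obtain ⟨v', hv'⟩ := Triangle.coyoneda_exact₃ _ hT' v hv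
  exact ⟨v', hv'⟩

include h1 h3 in
lemma exists_leftApprox (A : C) :
    ∃ (X₁ X₂ : C) (α : A ⟶ X₁) (β : X₁ ⟶ X₂)
      (γ : X₂ ⟶ (shiftFunctor C (1 : ℤ)).obj A),
      (Triangle.mk α β γ ∈ distTriang C) ∧ 𝒳.mem X₁ ∧ 𝒳.mem X₂ ∧
      ∀ (M : C), 𝒳.mem M → ∀ u : A ⟶ M, ∃ u' : X₁ ⟶ M, u = α ≫ u' := by
  obtain ⟨T, hT, hA, m2, m3⟩ := h3 A
  have hA' : (shiftFunctor C (1 : ℤ)).obj T.obj₁ =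
      (shiftFunctor C (1 : ℤ)).obj A := by rw [hA]
  have hT' : Triangle.mk (eqToHom hA.symm ≫ T.mor₁) T.mor₂
      (T.mor₃ ≫ eqToHom hA') ∈ distTriang C := by
    refine isomorphic_distinguished T hT _ ?_
    exact Triangle.isoMk _ _ (eqToIso hA.symm) (Iso.refl _) (Iso.refl _)
      (by simp [Triangle.mk]) (by simp [Triangle.mk]) (by simp [Triangle.mk, eqToHom_map])
  refine ⟨T.obj₂, T.obj₃, eqToHom hA.symm ≫ T.mor₁, T.mor₂,
    T.mor₃ ≫ eqToHom hA', hT', m2, m3, ?_⟩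
  intro M hM u
  have hT'' := inv_rot_of_distTriang _ hT'
  have hu : (Triangle.mk (eqToHom hA.symm ≫ T.mor₁) T.mor₂
      (T.mor₃ ≫ eqToHom hA')).invRotate.mor₁ ≫ u = 0 :=
    shift_hom_zero 𝒳 h1 m3 hM _
  obtain ⟨u', hu'⟩ := Triangle.yoneda_exact₂ _ hT'' u hu
  exact ⟨u', hu'⟩

include h1 h2 h3 in
lemma cokernel_data {A B : C} (f : A ⟶ B) :
    ∃ (Z : C) (c : B ⟶ Z),
      f ≫ c ∈ homIdeal 𝒳 A Z ∧
      (∀ (W : C) (t : B ⟶ W), f ≫ t ∈ homIdeal 𝒳 A W →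
        ∃ s : Z ⟶ W, c ≫ s = t) ∧
      (∀ (W : C) (s : Z ⟶ W), c ≫ s ∈ homIdeal 𝒳 B W →
        s ∈ homIdeal 𝒳 Z W) := by
  obtain ⟨X'₁, X'₂, α, β, γ, hTA, mem1, mem2, apxA⟩ := exists_leftApprox 𝒳 h1 h3 A
  obtain ⟨Z', g', h', hT1⟩ := distinguished_cocone_triangle (biprod.lift f α)
  have hmg : biprod.lift f α ≫ g' = 0 :=
    comp_distTriang_mor_zero₁₂ _ hT1
  have hfc : f ≫ biprod.inl ≫ g' = -(α ≫ biprod.inr ≫ g') := by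
    have h0 : (f ≫ biprod.inl + α ≫ biprod.inr) ≫ g' = 0 := by
      rw [← biprod.lift_eq]; exact hmg
    rw [add_comp, assoc, assoc] at h0
    exact eq_neg_of_add_eq_zero_left h0
  refine ⟨Z', biprod.inl ≫ g',
    ⟨X'₁, mem1, -α, biprod.inr ≫ g', by rw [neg_comp, ← hfc]⟩, ?_, ?_⟩
  · intro W t ht
    obtain ⟨M, hM, u, v, huv⟩ := ht
    obtain ⟨u'', hu''⟩ := apxA M hM u
    have h0 : biprod.lift f α ≫ biprod.desc t (-(u'' ≫ v)) = 0 := by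
      rw [biprod.lift_desc, comp_neg, ← assoc, ← hu'', huv, add_neg_cancel]
    obtain ⟨s, hs⟩ : ∃ s : Z' ⟶ W, biprod.desc t (-(u'' ≫ v)) = g' ≫ s :=
      Triangle.yoneda_exact₂ _ hT1 _ h0
    refine ⟨s, ?_⟩
    have := congrArg (fun z => biprod.inl ≫ z) hs
    simpa using this.symm
  · intro W s hs
    obtain ⟨N, hN, p, q', hpq⟩ := hs
    obtain ⟨X₀, X₁, x, π, δ, hTW, mem₀, mem₁, apxW⟩ := exists_rightApprox 𝒳 h1 h2 W
    have hcomp : g' ≫ s ≫ δ = 0 := by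
      apply biprod.hom_ext'
      · rw [comp_zero]
        simp only [← assoc]
        rw [← hpq]
        simp only [assoc]
        rw [h1 _ _ hN mem₀ (q' ≫ δ), comp_zero]
      · rw [comp_zero]
        exact h1 _ _ mem1 mem₀ _
    obtain ⟨e, he⟩ : ∃ e : (shiftFunctor C (1 : ℤ)).obj A ⟶ (shiftFunctor C (1 : ℤ)).obj X₀,
        s ≫ δ = h' ≫ e := Triangle.yoneda_exact₃ _ hT1 (s ≫ δ) hcomp
    obtain ⟨e₁, he₁⟩ := apxA X₀ mem₀ ((shiftFunctor C (1 : ℤ)).preimage e)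
    have h31 : h' ≫ (shiftFunctor C (1 : ℤ)).map (biprod.lift f α) = 0 :=
      comp_distTriang_mor_zero₃₁ _ hT1
    have hsδ : s ≫ δ = 0 := by
      calc s ≫ δ = h' ≫ e := he
        _ = h' ≫ (shiftFunctor C (1 : ℤ)).map (α ≫ e₁) := by
            rw [← he₁, Functor.map_preimage]
        _ = h' ≫ (shiftFunctor C (1 : ℤ)).map ((biprod.lift f α ≫ biprod.snd) ≫ e₁) := by
            rw [biprod.lift_snd]
        _ = 0 := by
            rw [Functor.map_comp, Functor.map_comp, ← assoc, ← assoc, h31,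
              zero_comp, zero_comp]
    obtain ⟨s', hs'⟩ := Triangle.coyoneda_exact₃ _ hTW s hsδ
    exact ⟨X₁, mem₁, s', π, hs'.symm⟩

include h1 h2 h3 in
lemma kernel_data {A B : C} (f : A ⟶ B) :
    ∃ (K : C) (k : K ⟶ A),
      k ≫ f ∈ homIdeal 𝒳 K B ∧
      (∀ (T : C) (t : T ⟶ A), t ≫ f ∈ homIdeal 𝒳 T B →
        ∃ s : T ⟶ K, s ≫ k = t) ∧
      (∀ (T : C) (s : T ⟶ K), s ≫ k ∈ homIdeal 𝒳 T A →
        s ∈ homIdeal 𝒳 T K) := by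
  obtain ⟨X₀, X₁, x, π, δ, hTB, mem₀, mem₁, apxB⟩ := exists_rightApprox 𝒳 h1 h2 B
  obtain ⟨Z'', e, h'', hT2⟩ := distinguished_cocone_triangle (biprod.desc f π)
  have hT2' : (Triangle.mk (biprod.desc f π) e h'').invRotate ∈ distTriang C :=
    inv_rot_of_distTriang _ hT2
  set k : (shiftFunctor C (-1 : ℤ)).obj Z'' ⟶ A ⊞ X₁ := (Triangle.mk (biprod.desc f π) e h'').invRotate.mor₁ with hkdef
  have hkd : k ≫ biprod.desc f π = 0 := comp_distTriang_mor_zero₁₂ _ hT2'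
  have hde : biprod.desc f π ≫ e = 0 := comp_distTriang_mor_zero₁₂ _ hT2
  have hπe : π ≫ e = 0 := by
    rw [← biprod.inr_desc f π, assoc, hde, comp_zero]
  have hkf : k ≫ biprod.fst ≫ f = -(k ≫ biprod.snd ≫ π) := by
    have h0 : k ≫ (biprod.fst ≫ f + biprod.snd ≫ π) = 0 := by
      rw [← biprod.desc_eq]; exact hkd
    rw [comp_add] at h0
    exact eq_neg_of_add_eq_zero_left h0
  refine ⟨_, k ≫ biprod.fst,
    ⟨X₁, mem₁, -(k ≫ biprod.snd), π, by rw [neg_comp, assoc, ← hkf, assoc]⟩, ?_, ?_⟩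
  · intro T t ht
    obtain ⟨M, hM, u, v, huv⟩ := ht
    obtain ⟨v'', hv''⟩ := apxB M hM v
    have h0 : biprod.lift t (-(u ≫ v'')) ≫ biprod.desc f π = 0 := by
      rw [biprod.lift_desc, neg_comp, assoc, ← hv'', huv, add_neg_cancel]
    obtain ⟨s, hs⟩ : ∃ s : T ⟶ (shiftFunctor C (-1 : ℤ)).obj Z'', biprod.lift t (-(u ≫ v'')) = s ≫ k :=
      Triangle.coyoneda_exact₂ _ hT2' _ h0
    refine ⟨s, ?_⟩
    rw [← assoc, ← hs, biprod.lift_fst]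
  · intro T s hs
    obtain ⟨N, hN, p, q', hpq⟩ := hs
    obtain ⟨Y₁, Y₂, αT, βT, γT, hTT, memY1, memY2, apxT⟩ := exists_leftApprox 𝒳 h1 h3 T
    have hT3 : (Triangle.mk αT βT γT).invRotate ∈ distTriang C :=
      inv_rot_of_distTriang _ hTT
    set ζ : (shiftFunctor C (-1 : ℤ)).obj Y₂ ⟶ T := (Triangle.mk αT βT γT).invRotate.mor₁ with hζdef
    have hζk : ζ ≫ s ≫ k = 0 := by
      apply biprod.hom_ext
      · rw [zero_comp, assoc, assoc]
        have hfst : s ≫ k ≫ biprod.fst = p ≫ q' := hpq.symm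
        rw [hfst, ← assoc, shift_hom_zero 𝒳 h1 memY2 hN (ζ ≫ p), zero_comp]
      · rw [zero_comp]
        exact shift_hom_zero 𝒳 h1 memY2 mem₁ _
    have hT4 : (Triangle.mk (biprod.desc f π) e h'').invRotate.invRotate ∈ distTriang C :=
      inv_rot_of_distTriang _ hT2'
    obtain ⟨m, hm⟩ : ∃ m : (shiftFunctor C (-1 : ℤ)).obj Y₂ ⟶ (shiftFunctor C (-1 : ℤ)).obj B,
        ζ ≫ s = m ≫ (Triangle.mk (biprod.desc f π) e h'').invRotate.invRotate.mor₁ :=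
      Triangle.coyoneda_exact₂ _ hT4 (ζ ≫ s) (by
      exact (assoc _ _ _).trans hζk)
    obtain ⟨m₁, hm₁⟩ := apxB Y₂ memY2 ((shiftFunctor C (-1 : ℤ)).preimage m)
    have hπj : (shiftFunctor C (-1 : ℤ)).map π ≫
        (Triangle.mk (biprod.desc f π) e h'').invRotate.invRotate.mor₁ = 0 := by
      refine invRotate_premor ((Triangle.mk (biprod.desc f π) e h'').invRotate) π ?_
      show π ≫ (e ≫ (shiftFunctorCompIsoId C (-1 : ℤ) (1 : ℤ) (by omega)).inv.app Z'') = 0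
      rw [← assoc, hπe, zero_comp]
    have hz : ζ ≫ s = 0 := by
      have hm' : m = (shiftFunctor C (-1 : ℤ)).map m₁ ≫ (shiftFunctor C (-1 : ℤ)).map π := by
        rw [← Functor.map_comp, ← hm₁, Functor.map_preimage]
      refine hm.trans ?_
      refine (congrArg (· ≫ (Triangle.mk (biprod.desc f π) e h'').invRotate.invRotate.mor₁) hm').trans ?_
      exact (assoc _ _ _).trans ((congrArg ((shiftFunctor C (-1 : ℤ)).map m₁ ≫ ·) hπj).trans comp_zero)
    obtain ⟨s₁, hs₁⟩ := Triangle.yoneda_exact₂ _ hT3 s hz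
    exact ⟨Y₁, memY1, αT, s₁, hs₁.symm⟩

include h1 in
lemma mono_normal {A B : C} (f : A ⟶ B) (hm : Mono (qm 𝒳 f)) :
    ∃ (Z : C) (g : B ⟶ Z), f ≫ g ∈ homIdeal 𝒳 A Z ∧
      ∀ (T : C) (t : T ⟶ B), t ≫ g ∈ homIdeal 𝒳 T Z →
        ∃ t₁ : T ⟶ A, t - t₁ ≫ f ∈ homIdeal 𝒳 T B := by
  obtain ⟨Z, g, h, hT⟩ := distinguished_cocone_triangle f
  have hT' : (Triangle.mk f g h).invRotate ∈ distTriang C :=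
    inv_rot_of_distTriang _ hT
  have hfg : f ≫ g = 0 := comp_distTriang_mor_zero₁₂ _ hT
  have hk : qm 𝒳 ((Triangle.mk f g h).invRotate.mor₁) = 0 := by
    haveI := hm
    apply zero_of_comp_mono (qm 𝒳 f)
    have h12 : (Triangle.mk f g h).invRotate.mor₁ ≫ f = 0 :=
      comp_distTriang_mor_zero₁₂ _ hT'
    exact (qm_comp 𝒳 _ _).trans ((congrArg (qm 𝒳) h12).trans (qm_zero 𝒳))
  obtain ⟨M', hM', u', v', hu'v'⟩ := (qm_zero_iff 𝒳 _).mp hk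
  refine ⟨Z, g, by rw [hfg]; exact zero_mem _, ?_⟩
  intro T t ht
  obtain ⟨M, hM, u, v, huv⟩ := ht
  have hvh : v ≫ h = 0 :=
    mor₃_comp_zero_of (Triangle.mk f g h) v u' v' hu'v'.symm
      (shift_hom_zero 𝒳 h1 hM hM' _)
  have hcy : ∃ w : M ⟶ B, v = w ≫ g := Triangle.coyoneda_exact₃ _ hT v hvh
  obtain ⟨w, hw⟩ := hcy
  have h0 : (t - u ≫ w) ≫ g = 0 := by
    rw [sub_comp, assoc, ← hw, huv, sub_self]
  have hcy2 : ∃ t₁ : T ⟶ A, t - u ≫ w = t₁ ≫ f :=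
    Triangle.coyoneda_exact₂ _ hT (t - u ≫ w) h0
  obtain ⟨t₁, ht₁⟩ := hcy2
  refine ⟨t₁, ⟨M, hM, u, w, ?_⟩⟩
  rw [← ht₁, sub_sub_cancel]

include h1 in
lemma epi_normal {A B : C} (f : A ⟶ B) (he : Epi (qm 𝒳 f)) :
    ∃ (K : C) (k : K ⟶ A), k ≫ f ∈ homIdeal 𝒳 K B ∧
      ∀ (T : C) (t : A ⟶ T), k ≫ t ∈ homIdeal 𝒳 K T →
        ∃ t₁ : B ⟶ T, t - f ≫ t₁ ∈ homIdeal 𝒳 A T := by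
  obtain ⟨Z, g, h, hT⟩ := distinguished_cocone_triangle f
  have hT' : (Triangle.mk f g h).invRotate ∈ distTriang C :=
    inv_rot_of_distTriang _ hT
  have hT4 : (Triangle.mk f g h).invRotate.invRotate ∈ distTriang C :=
    inv_rot_of_distTriang _ hT'
  have hfg : f ≫ g = 0 := comp_distTriang_mor_zero₁₂ _ hT
  have hkf : (Triangle.mk f g h).invRotate.mor₁ ≫ f = 0 :=
    comp_distTriang_mor_zero₁₂ _ hT'
  have hg : qm 𝒳 g = 0 := by
    haveI := he
    apply zero_of_epi_comp (qm 𝒳 f)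
    rw [qm_comp, hfg, qm_zero]
  obtain ⟨M'', hM'', c, d'', hcd⟩ := (qm_zero_iff 𝒳 g).mp hg
  refine ⟨_, (Triangle.mk f g h).invRotate.mor₁,
    by exact (congrArg (· ∈ homIdeal 𝒳 _ B) hkf).mpr (zero_mem _), ?_⟩
  intro T t ht
  obtain ⟨M, hM, u, v, huv⟩ := ht
  have hju : (Triangle.mk f g h).invRotate.invRotate.mor₁ ≫ u = 0 := by
    refine invRotate_mor_comp ((Triangle.mk f g h).invRotate) c
      (d'' ≫ (shiftFunctorCompIsoId C (-1 : ℤ) (1 : ℤ) (by omega)).inv.app Z) ?_ u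
      (shift_hom_zero 𝒳 h1 hM'' hM)
    show (Triangle.mk f g h).invRotate.mor₃ = _
    exact (congrArg (· ≫ (shiftFunctorCompIsoId C (-1 : ℤ) (1 : ℤ) (by omega)).inv.app Z)
      hcd.symm).trans (assoc _ _ _)
  have hyo : ∃ u₁ : A ⟶ M, u = (Triangle.mk f g h).invRotate.mor₁ ≫ u₁ :=
    Triangle.yoneda_exact₂ _ hT4 u hju
  obtain ⟨u₁, hu₁⟩ := hyo
  have h0 : (Triangle.mk f g h).invRotate.mor₁ ≫ (t - u₁ ≫ v) = 0 := by
    exact (comp_sub _ _ _).trans (sub_eq_zero.mpr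
      ((assoc _ _ _).symm.trans ((congrArg (· ≫ v) hu₁.symm).trans huv)).symm)
  have hyo2 : ∃ t₁ : B ⟶ T, t - u₁ ≫ v = f ≫ t₁ :=
    Triangle.yoneda_exact₂ _ hT' (t - u₁ ≫ v) h0
  obtain ⟨t₁, ht₁⟩ := hyo2
  refine ⟨t₁, ⟨M, hM, u₁, v, ?_⟩⟩
  have : f ≫ t₁ = t - u₁ ≫ v := ht₁.symm
  rw [this, sub_sub_cancel]

end Shifted

section Glue

noncomputable def kernelForkIsLimit {K A B : C} (k : K ⟶ A) (f : A ⟶ B)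
    (w : qm 𝒳 k ≫ qm 𝒳 f = 0)
    (hex : ∀ (T : C) (t : T ⟶ A), t ≫ f ∈ homIdeal 𝒳 T B →
      ∃ s : T ⟶ K, qm 𝒳 (s ≫ k) = qm 𝒳 t)
    (huniq : ∀ (T : C) (s : T ⟶ K), s ≫ k ∈ homIdeal 𝒳 T A →
      s ∈ homIdeal 𝒳 T K) :
    IsLimit (KernelFork.ofι (qm 𝒳 k) w) :=
  KernelFork.IsLimit.ofι _ _
    (fun {W'} g' hg' => qm 𝒳 (hex W'.as (repm 𝒳 g')
      ((qm_zero_iff 𝒳 _).mp (by rw [← qm_comp, qm_repm]; exact hg'))).choose)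
    (fun {W'} g' hg' => by
      rw [qm_comp,
        (hex W'.as (repm 𝒳 g')
          ((qm_zero_iff 𝒳 _).mp (by rw [← qm_comp, qm_repm]; exact hg'))).choose_spec,
        qm_repm])
    (fun {W'} g' hg' m hm => by
      set HEX := hex W'.as (repm 𝒳 g')
        ((qm_zero_iff 𝒳 _).mp (by rw [← qm_comp, qm_repm]; exact hg')) with hHEX
      show m = qm 𝒳 HEX.choose
      have e1 : qm 𝒳 (repm 𝒳 m ≫ k) = qm 𝒳 (HEX.choose ≫ k) := by
        rw [← qm_comp, qm_repm 𝒳 m, hm, HEX.choose_spec, qm_repm]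
      have e2 : (repm 𝒳 m - HEX.choose) ≫ k ∈ homIdeal 𝒳 W'.as A := by
        rw [Preadditive.sub_comp]
        exact (qm_eq_iff 𝒳 _ _).mp e1
      have e3 := huniq W'.as _ e2
      have e4 : qm 𝒳 (repm 𝒳 m) = qm 𝒳 HEX.choose := (qm_eq_iff 𝒳 _ _).mpr e3
      rw [← qm_repm 𝒳 m, e4])

noncomputable def cokernelCoforkIsColimit {A B Z : C} (f : A ⟶ B) (c : B ⟶ Z)
    (w : qm 𝒳 f ≫ qm 𝒳 c = 0)
    (hex : ∀ (W : C) (t : B ⟶ W), f ≫ t ∈ homIdeal 𝒳 A W →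
      ∃ s : Z ⟶ W, qm 𝒳 (c ≫ s) = qm 𝒳 t)
    (huniq : ∀ (W : C) (s : Z ⟶ W), c ≫ s ∈ homIdeal 𝒳 B W →
      s ∈ homIdeal 𝒳 Z W) :
    IsColimit (CokernelCofork.ofπ (qm 𝒳 c) w) :=
  CokernelCofork.IsColimit.ofπ _ _
    (fun {W'} g' hg' => qm 𝒳 (hex W'.as (repm 𝒳 g')
      ((qm_zero_iff 𝒳 _).mp (by rw [← qm_comp, qm_repm]; exact hg'))).choose)
    (fun {W'} g' hg' => by
      rw [qm_comp,
        (hex W'.as (repm 𝒳 g')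
          ((qm_zero_iff 𝒳 _).mp (by rw [← qm_comp, qm_repm]; exact hg'))).choose_spec,
        qm_repm])
    (fun {W'} g' hg' m hm => by
      set HEX := hex W'.as (repm 𝒳 g')
        ((qm_zero_iff 𝒳 _).mp (by rw [← qm_comp, qm_repm]; exact hg')) with hHEX
      show m = qm 𝒳 HEX.choose
      have e1 : qm 𝒳 (c ≫ repm 𝒳 m) = qm 𝒳 (c ≫ HEX.choose) := by
        rw [← qm_comp, qm_repm 𝒳 m, hm, HEX.choose_spec, qm_repm]
      have e2 : c ≫ (repm 𝒳 m - HEX.choose) ∈ homIdeal 𝒳 B W'.as := by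
        rw [Preadditive.comp_sub]
        exact (qm_eq_iff 𝒳 _ _).mp e1
      have e3 := huniq W'.as _ e2
      have e4 : qm 𝒳 (repm 𝒳 m) = qm 𝒳 HEX.choose := (qm_eq_iff 𝒳 _ _).mpr e3
      rw [← qm_repm 𝒳 m, e4])

end Glue

section Main

variable [HasShift C ℤ] [∀ i : ℤ, (shiftFunctor C i).Additive] [Pretriangulated C]
  (h1 : ∀ X X' : C, 𝒳.mem X → 𝒳.mem X' →
    ∀ f : X ⟶ (shiftFunctor C (1 : ℤ)).obj X', f = 0)
  (h2 : ∀ Cc : C, ∃ T : Triangle C, (T ∈ distTriang C) ∧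
    𝒳.mem T.obj₁ ∧ 𝒳.mem T.obj₂ ∧ T.obj₃ = Cc)
  (h3 : ∀ Cc : C, ∃ T : Triangle C, (T ∈ distTriang C) ∧
    T.obj₁ = Cc ∧ 𝒳.mem T.obj₂ ∧ 𝒳.mem T.obj₃)

include h1 h2 h3 in
lemma hasKernels_quot : HasKernels (QuotObj 𝒳) := by
  constructor
  intro P R φ
  obtain ⟨f, rfl⟩ : ∃ f : P.as ⟶ R.as, qm 𝒳 f = φ := ⟨repm 𝒳 φ, qm_repm 𝒳 φ⟩
  obtain ⟨K, k, hk0, hex, huniq⟩ := kernel_data 𝒳 h1 h2 h3 f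
  have w : qm 𝒳 k ≫ qm 𝒳 f = 0 := by
    rw [qm_comp, qm_zero_iff]; exact hk0
  exact HasLimit.mk ⟨_, kernelForkIsLimit 𝒳 k f w
    (fun T t ht => (hex T t ht).elim (fun s hs => ⟨s, by rw [hs]⟩)) huniq⟩

include h1 h2 h3 in
lemma hasCokernels_quot : HasCokernels (QuotObj 𝒳) := by
  constructor
  intro P R φ
  obtain ⟨f, rfl⟩ : ∃ f : P.as ⟶ R.as, qm 𝒳 f = φ := ⟨repm 𝒳 φ, qm_repm 𝒳 φ⟩
  obtain ⟨Z, c, hc0, hex, huniq⟩ := cokernel_data 𝒳 h1 h2 h3 f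
  have w : qm 𝒳 f ≫ qm 𝒳 c = 0 := by
    rw [qm_comp, qm_zero_iff]; exact hc0
  exact HasColimit.mk ⟨_, cokernelCoforkIsColimit 𝒳 f c w
    (fun W t ht => (hex W t ht).elim (fun s hs => ⟨s, by rw [hs]⟩)) huniq⟩

include h1 in
lemma nonempty_normalMono {P R : QuotObj 𝒳} (φ : P ⟶ R) (hm : Mono φ) :
    Nonempty (NormalMono φ) := by
  obtain ⟨f, rfl⟩ : ∃ f : P.as ⟶ R.as, qm 𝒳 f = φ := ⟨repm 𝒳 φ, qm_repm 𝒳 φ⟩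
  obtain ⟨Z, g, hfg, hlift⟩ := mono_normal 𝒳 h1 f hm
  have w : qm 𝒳 f ≫ qm 𝒳 g = 0 := by
    rw [qm_comp, qm_zero_iff]; exact hfg
  refine ⟨⟨⟨Z⟩, qm 𝒳 g, w, kernelForkIsLimit 𝒳 f g w ?_ ?_⟩⟩
  · intro T t ht
    obtain ⟨t₁, ht₁⟩ := hlift T t ht
    exact ⟨t₁, ((qm_eq_iff 𝒳 t (t₁ ≫ f)).mpr ht₁).symm⟩
  · intro T s hs
    have hc : qm 𝒳 s ≫ qm 𝒳 f = 0 := by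
      rw [qm_comp, qm_zero_iff]; exact hs
    haveI := hm
    exact (qm_zero_iff 𝒳 s).mp (zero_of_comp_mono (qm 𝒳 f) hc)

include h1 in
lemma nonempty_normalEpi {P R : QuotObj 𝒳} (φ : P ⟶ R) (he : Epi φ) :
    Nonempty (NormalEpi φ) := by
  obtain ⟨f, rfl⟩ : ∃ f : P.as ⟶ R.as, qm 𝒳 f = φ := ⟨repm 𝒳 φ, qm_repm 𝒳 φ⟩
  obtain ⟨K, k, hkf, hlift⟩ := epi_normal 𝒳 h1 f he
  have w : qm 𝒳 k ≫ qm 𝒳 f = 0 := by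
    rw [qm_comp, qm_zero_iff]; exact hkf
  refine ⟨⟨⟨K⟩, qm 𝒳 k, w, cokernelCoforkIsColimit 𝒳 k f w ?_ ?_⟩⟩
  · intro T t ht
    obtain ⟨t₁, ht₁⟩ := hlift T t ht
    exact ⟨t₁, ((qm_eq_iff 𝒳 t (f ≫ t₁)).mpr ht₁).symm⟩
  · intro T s hs
    have hc : qm 𝒳 f ≫ qm 𝒳 s = 0 := by
      rw [qm_comp, qm_zero_iff]; exact hs
    haveI := he
    exact (qm_zero_iff 𝒳 s).mp (zero_of_epi_comp (qm 𝒳 f) hc)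

end Main

end KZ


open CategoryTheory.Pretriangulated in
/-- Let `C` be a triangulated category whose idempotents
split and `𝒳` a cluster tilting subcategory (i.e. `Hom(𝒳, Σ𝒳) = 0` and every
object sits in distinguished triangles `X₀ → X₁ → C → ΣX₀` and
`C → X'₁ → X'₂ → ΣC` with the `Xᵢ, X'ᵢ` in `𝒳`). Then the quotient `C/𝒳` is an
abelian category. -/
theorem triangulated_quotient_abelian
    {C : Type u} [Category.{v} C] [Preadditive C] [HasZeroObject C]
    [HasBinaryBiproducts C] [HasShift C ℤ]
    [∀ i : ℤ, (shiftFunctor C i).Additive] [Pretriangulated C] [IsTriangulated C]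
    (hC : IsIdempotentComplete C) (𝒳 : AddSubcat C)
    (h1 : ∀ X X' : C, 𝒳.mem X → 𝒳.mem X' →
      ∀ f : X ⟶ (shiftFunctor C (1 : ℤ)).obj X', f = 0)
    (h2 : ∀ Cc : C, ∃ T : Triangle C, T ∈ distinguishedTriangles ∧
      𝒳.mem T.obj₁ ∧ 𝒳.mem T.obj₂ ∧ T.obj₃ = Cc)
    (h3 : ∀ Cc : C, ∃ T : Triangle C, T ∈ distinguishedTriangles ∧
      T.obj₁ = Cc ∧ 𝒳.mem T.obj₂ ∧ 𝒳.mem T.obj₃) :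
    Nonempty (Abelian (QuotObj 𝒳)) := by
  haveI : HasZeroObject (QuotObj 𝒳) := hasZeroObject_quot 𝒳
  haveI : HasTerminal (QuotObj 𝒳) := inferInstance
  haveI : HasBinaryProducts (QuotObj 𝒳) := inferInstance
  haveI : HasFiniteProducts (QuotObj 𝒳) :=
    hasFiniteProducts_of_has_binary_and_terminal
  haveI : HasKernels (QuotObj 𝒳) := hasKernels_quot 𝒳 h1 h2 h3
  haveI : HasCokernels (QuotObj 𝒳) := hasCokernels_quot 𝒳 h1 h2 h3
  haveI : IsNormalMonoCategory (QuotObj 𝒳) :=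
    ⟨fun f hm => nonempty_normalMono 𝒳 h1 f hm⟩
  haveI : IsNormalEpiCategory (QuotObj 𝒳) :=
    ⟨fun f he => nonempty_normalEpi 𝒳 h1 f he⟩
  exact ⟨{ toPreadditive := inferInstance,
           toIsNormalMonoCategory := inferInstance,
           toIsNormalEpiCategory := inferInstance }⟩
end
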